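/- arXiv:2512.24491 — 6 statements merged into one kernel-verified Lean document; each statement's English description precedes it below -/
import Mathlib

section
/- Let n ≥ 1 and let Q be an n×n real matrix with nonnegative entries and zero diagonal. Let x ∈ ℝⁿ. Then the jump system JS(x), namely z_i = ( x_i − Σ_{j≠i} q_{ij} z_j )_{-} for all 1 ≤ i ≤ n, admits a solution z ∈ ℝⁿ with z ≥ 0 componentwise if and only if x belongs to the dual cone C* = { y ∈ ℝⁿ : uᵀy ≥ 0 for all u ∈ C }, where C = { u ∈ ℝⁿ : u ≥ 0 componentwise and uᵀ(I−Q) ≤ 0 componentwise }. -/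
open Matrix Finset Filter

/-- Negative part: `(a)₋ = max(0, −a)`. -/
noncomputable def nPart (a : ℝ) : ℝ := max 0 (-a)

/-- The jump system JS(x): `z i = (x i − ∑_{j ≠ i} Q i j * z j)₋` for all `i`. -/
noncomputable def JS {n : ℕ} (Q : Matrix (Fin n) (Fin n) ℝ) (x z : Fin n → ℝ) : Prop :=
  ∀ i, z i = nPart (x i - ∑ j ∈ Finset.univ.erase i, Q i j * z j)

/-- The cone `C = {u : u ≥ 0 and uᵀ(I − Q) ≤ 0 componentwise}`. -/
def coneC {n : ℕ} (Q : Matrix (Fin n) (Fin n) ℝ) : Set (Fin n → ℝ) :=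
  {u | (∀ i, 0 ≤ u i) ∧ ∀ j, Matrix.vecMul u (1 - Q) j ≤ 0}

/-- The dual cone `C* = {y : uᵀ y ≥ 0 for all u ∈ C}`. -/
def dualConeC {n : ℕ} (Q : Matrix (Fin n) (Fin n) ℝ) : Set (Fin n → ℝ) :=
  {y | ∀ u ∈ coneC Q, 0 ≤ ∑ i, u i * y i}

/-- The feasible set `F(x) = {z : z ≥ 0 and (I − Q) z ≥ −x componentwise}`. -/
def feas {n : ℕ} (Q : Matrix (Fin n) (Fin n) ℝ) (x : Fin n → ℝ) : Set (Fin n → ℝ) :=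
  {z | (∀ i, 0 ≤ z i) ∧ ∀ i, -(x i) ≤ Matrix.mulVec (1 - Q) z i}

open RealInnerProductSpace

section Aux


open Finset

variable {E : Type*} [NormedAddCommGroup E] [NormedSpace ℝ E] [FiniteDimensional ℝ E]

/-- The cone generated by `v i`, `i ∈ s`. -/
def coneSet {ι : Type*} [Fintype ι] (v : ι → E) (s : Finset ι) : Set E :=
  {x | ∃ c : ι → ℝ, (∀ i, 0 ≤ c i) ∧ (∀ i ∉ s, c i = 0) ∧ ∑ i, c i • v i = x}

theorem sum_extend_subtype {ι : Type*} [Fintype ι] [DecidableEq ι] (s : Finset ι)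
    (c : ↥s → ℝ) (v : ι → E) :
    ∑ i : ι, (if h : i ∈ s then c ⟨i, h⟩ else 0) • v i = ∑ i : ↥s, c i • v i := by
  rw [show (∑ i : ι, (if h : i ∈ s then c ⟨i, h⟩ else 0) • v i)
      = ∑ i ∈ s, (if h : i ∈ s then c ⟨i, h⟩ else 0) • v i from
    (Finset.sum_subset (Finset.subset_univ s) (fun i _ hi => by simp [hi])).symm,
    ← Finset.sum_coe_sort s (fun i => (if h : i ∈ s then c ⟨i, h⟩ else 0) • v i)]
  exact Finset.sum_congr rfl fun i _ => by simp [i.2]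

theorem coneSet_isClosed {ι : Type*} [Fintype ι] [DecidableEq ι] (v : ι → E) (s : Finset ι) :
    IsClosed (coneSet v s) := by
  induction s using Finset.strongInduction with
  | _ s ih =>
  by_cases hli : LinearIndependent ℝ (fun i : ↥s => v i)
  · -- closed embedding case
    let f : (↥s → ℝ) →ₗ[ℝ] E :=
      { toFun := fun c => ∑ i : ↥s, c i • v i
        map_add' := by intro a b; simp [add_smul, Finset.sum_add_distrib]
        map_smul' := by intro m a; simp [smul_smul, Finset.smul_sum] }
    have hker : LinearMap.ker f = ⊥ := by
      rw [LinearMap.ker_eq_bot']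
      intro c hc
      have := Fintype.linearIndependent_iff.mp hli c hc
      funext i; exact this i
    have hemb := LinearMap.isClosedEmbedding_of_injective (f := f) hker
    have hclosed : IsClosed {c : ↥s → ℝ | ∀ i, 0 ≤ c i} := by
      have : {c : ↥s → ℝ | ∀ i, 0 ≤ c i} = ⋂ i, {c | 0 ≤ c i} := by
        ext c; simp [Set.mem_iInter]
      rw [this]
      exact isClosed_iInter fun i => isClosed_le continuous_const (continuous_apply i)
    have himg : coneSet v s = f '' {c : ↥s → ℝ | ∀ i, 0 ≤ c i} := by
      ext x
      constructor
      · rintro ⟨c, hc0, hcs, hsum⟩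
        refine ⟨fun i => c i, fun i => hc0 i, ?_⟩
        show ∑ i : ↥s, c ↑i • v ↑i = x
        rw [Finset.sum_coe_sort s (fun i => c i • v i),
          Finset.sum_subset (Finset.subset_univ s)
            (fun i _ hi => by rw [hcs i hi, zero_smul])]
        exact hsum
      · rintro ⟨c, hc, rfl⟩
        refine ⟨fun i => if h : i ∈ s then c ⟨i, h⟩ else 0, ?_, ?_, ?_⟩
        · intro i; by_cases h : i ∈ s <;> simp [h, hc _]
        · intro i hi; simp [hi]
        · exact sum_extend_subtype s c v
    rw [himg]
    exact hemb.isClosedMap _ hclosed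
  · -- dependent: reduce to smaller subsets
    obtain ⟨g, hgsum, i₀, hgi₀⟩ := Fintype.not_linearIndependent_iff.mp hli
    obtain ⟨d, hdsum, j₀, hdj₀⟩ :
        ∃ d : ↥s → ℝ, ∑ i, d i • v i = 0 ∧ ∃ j : ↥s, 0 < d j := by
      rcases lt_trichotomy (g i₀) 0 with h | h | h
      · exact ⟨-g, by simpa using hgsum, i₀, by simpa using h⟩
      · exact absurd h hgi₀
      · exact ⟨g, hgsum, i₀, h⟩
    have key : coneSet v s = ⋃ i ∈ s, coneSet v (s.erase i) := by
      ext x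
      constructor
      · rintro ⟨c, hc0, hcs, hsum⟩
        set D : ι → ℝ := fun i => if h : i ∈ s then d ⟨i, h⟩ else 0 with hD
        have hDsum : ∑ i, D i • v i = 0 := by
          rw [hD, sum_extend_subtype s d v]; exact hdsum
        have hDj₀ : 0 < D (j₀ : ι) := by simp [hD, j₀.2, hdj₀]
        set P : Finset ι := univ.filter (fun i => 0 < D i) with hP
        obtain ⟨i0, hi0P, hmin⟩ := P.exists_min_image (fun i => c i / D i)
          ⟨(j₀ : ι), by simp [hP, hDj₀]⟩
        have hDi0 : 0 < D i0 := by simpa [hP] using hi0P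
        have hi0s : i0 ∈ s := by
          by_contra h; rw [hD] at hDi0; simp [h] at hDi0
        set t : ℝ := c i0 / D i0 with ht
        have ht0 : 0 ≤ t := div_nonneg (hc0 i0) hDi0.le
        set c' : ι → ℝ := fun i => c i - t * D i with hc'
        have hc'0 : ∀ i, 0 ≤ c' i := by
          intro i
          by_cases h : 0 < D i
          · have := hmin i (by simp [hP, h])
            rw [div_le_div_iff₀ hDi0 h] at this
            have : t * D i ≤ c i := by
              rw [ht, div_mul_eq_mul_div, div_le_iff₀ hDi0]
              linarith [this]
            simp [hc']; linarith
          · push_neg at h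
            have : t * D i ≤ 0 := mul_nonpos_of_nonneg_of_nonpos ht0 h
            simp [hc']; nlinarith [hc0 i]
        refine Set.mem_iUnion.mpr ⟨i0, Set.mem_iUnion.mpr ⟨hi0s, c', hc'0, ?_, ?_⟩⟩
        · intro i hi
          by_cases h : i = i0
          · subst h
            show c i - t * D i = 0
            rw [ht, div_mul_cancel₀ _ (ne_of_gt hDi0), sub_self]
          · have hns : i ∉ s := fun hs => hi (Finset.mem_erase.mpr ⟨h, hs⟩)
            have hci : c i = 0 := hcs i hns
            have hDi : D i = 0 := by simp [hD, hns]
            simp [hc', hci, hDi]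
        · have : ∑ i, c' i • v i = ∑ i, c i • v i - t • ∑ i, D i • v i := by
            rw [Finset.smul_sum, ← Finset.sum_sub_distrib]
            apply Finset.sum_congr rfl
            intro i _
            rw [hc', sub_smul, smul_smul]
          rw [this, hDsum, smul_zero, sub_zero, hsum]
      · simp only [Set.mem_iUnion]
        rintro ⟨i, hi, c, hc0, hcs, hsum⟩
        exact ⟨c, hc0, fun j hj => hcs j (fun hj' => hj (Finset.mem_of_mem_erase hj')), hsum⟩
    rw [key]
    exact isClosed_biUnion_finset fun i hi => ih _ (Finset.erase_ssubset hi)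


theorem farkas {n : ℕ} {ι : Type*} [Fintype ι] [DecidableEq ι]
    (w : ι → EuclideanSpace ℝ (Fin n)) (b : EuclideanSpace ℝ (Fin n)) :
    (∃ c : ι → ℝ, (∀ i, 0 ≤ c i) ∧ ∑ i, c i • w i = b) ↔
      ∀ y : EuclideanSpace ℝ (Fin n), (∀ i, 0 ≤ ⟪w i, y⟫) → 0 ≤ ⟪b, y⟫ := by
  constructor
  · rintro ⟨c, hc0, rfl⟩ y hy
    rw [sum_inner]
    apply Finset.sum_nonneg
    intro i _
    rw [real_inner_smul_left]
    exact mul_nonneg (hc0 i) (hy i)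
  · intro h
    by_contra hne
    -- b is not in the cone generated by the w i
    have hbK : b ∉ coneSet w (univ : Finset ι) := by
      rintro ⟨c, hc0, _, hsum⟩
      exact hne ⟨c, hc0, hsum⟩
    set K : ConvexCone ℝ (EuclideanSpace ℝ (Fin n)) :=
      { carrier := coneSet w (univ : Finset ι)
        smul_mem' := by
          rintro t ht x ⟨c, hc0, -, rfl⟩
          exact ⟨fun i => t * c i, fun i => mul_nonneg ht.le (hc0 i), fun i hi => absurd (Finset.mem_univ i) hi,
            by rw [Finset.smul_sum]; exact Finset.sum_congr rfl fun i _ => (smul_smul t (c i) (w i)).symm⟩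
        add_mem' := by
          rintro x ⟨c, hc0, -, rfl⟩ y ⟨c', hc'0, -, rfl⟩
          exact ⟨fun i => c i + c' i, fun i => add_nonneg (hc0 i) (hc'0 i), fun i hi => absurd (Finset.mem_univ i) hi,
            by rw [← Finset.sum_add_distrib]; exact Finset.sum_congr rfl fun i _ => (add_smul (c i) (c' i) (w i))⟩ } with hK
    have hKne : (K : Set (EuclideanSpace ℝ (Fin n))).Nonempty :=
      ⟨0, ⟨fun _ => 0, fun i => le_refl 0, fun i hi => absurd (Finset.mem_univ i) hi, by simp⟩⟩
    have hKc : IsClosed (K : Set (EuclideanSpace ℝ (Fin n))) := coneSet_isClosed w univ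
    obtain ⟨y, hy1, hy2⟩ : ∃ y, (∀ x ∈ K, 0 ≤ ⟪x, y⟫) ∧ ⟪y, b⟫ < 0 := by
      let Kp : ProperCone ℝ (EuclideanSpace ℝ (Fin n)) :=
        { carrier := coneSet w (univ : Finset ι)
          add_mem' := fun {x y} hx hy => K.add_mem' hx hy
          zero_mem' := ⟨fun _ => 0, fun i => le_refl 0, fun i hi => absurd (Finset.mem_univ i) hi, by simp⟩
          smul_mem' := by
            rintro t x ⟨c, hc0, -, rfl⟩
            refine ⟨fun i => (t : ℝ) * c i, fun i => mul_nonneg t.2 (hc0 i), fun i hi => absurd (Finset.mem_univ i) hi, ?_⟩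
            change _ = (t : ℝ) • (∑ i, c i • w i : EuclideanSpace ℝ (Fin n))
            rw [Finset.smul_sum]
            exact Finset.sum_congr rfl fun i _ => (smul_smul (t : ℝ) (c i) (w i)).symm
          isClosed' := hKc }
      obtain ⟨y, h1, h2⟩ := Kp.hyperplane_separation' (x₀ := b) hbK
      exact ⟨y, fun x hx => h1 x hx, by rwa [real_inner_comm]⟩
    have hw : ∀ i, w i ∈ K := by
      intro i
      refine ⟨fun j => if j = i then 1 else 0, fun j => by positivity, fun j hj => absurd (Finset.mem_univ j) hj, ?_⟩
      simp [ite_smul]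
    have := h y (fun i => hy1 (w i) (hw i))
    rw [real_inner_comm] at hy2
    linarith

lemma mulVec_oneSub {n : ℕ} (Q : Matrix (Fin n) (Fin n) ℝ) (z : Fin n → ℝ) (i : Fin n) :
    Matrix.mulVec (1 - Q) z i = z i - ∑ j, Q i j * z j := by
  rw [Matrix.sub_mulVec]
  simp [Matrix.mulVec, dotProduct]

lemma vecMul_oneSub {n : ℕ} (Q : Matrix (Fin n) (Fin n) ℝ) (u : Fin n → ℝ) (j : Fin n) :
    Matrix.vecMul u (1 - Q) j = u j - ∑ i, u i * Q i j := by
  rw [Matrix.vecMul_sub]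
  simp [Matrix.vecMul, dotProduct]

lemma sum_apply_E {n : ℕ} {ι : Type*} [Fintype ι] (c : ι → ℝ)
    (w : ι → EuclideanSpace ℝ (Fin n)) (k : Fin n) :
    (∑ i, c i • w i) k = ∑ i, c i * w i k := by
  rw [show ((∑ i, c i • w i) k) = EuclideanSpace.proj (𝕜 := ℝ) k (∑ i, c i • w i) from rfl,
    map_sum]
  exact Finset.sum_congr rfl fun i _ => rfl

theorem feas_nonempty_iff {n : ℕ} (Q : Matrix (Fin n) (Fin n) ℝ) (x : Fin n → ℝ) :
    (feas Q x).Nonempty ↔ x ∈ dualConeC Q := by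
  classical
  set toE : (Fin n → ℝ) → EuclideanSpace ℝ (Fin n) :=
    fun f => (WithLp.equiv 2 _).symm f with htoE
  set w : (Fin n ⊕ Fin n) → EuclideanSpace ℝ (Fin n) := fun i =>
    Sum.elim (fun j => toE (fun k => if k = j then 1 else 0))
      (fun j => toE (fun k => -((1 : Matrix (Fin n) (Fin n) ℝ) k j - Q k j))) i with hwdef
  have happ : ∀ (f : Fin n → ℝ) (k : Fin n), toE f k = f k := fun f k => rfl
  have hiff := farkas w (toE x)
  have hinner : ∀ (a : EuclideanSpace ℝ (Fin n)) (b : EuclideanSpace ℝ (Fin n)),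
      ⟪a, b⟫ = ∑ k, a k * b k := by
    intro a b
    simp [PiLp.inner_apply, RCLike.inner_apply, mul_comm]
  have L1 : ∀ (f : Fin n → ℝ) (k : Fin n), ∑ j, f j * (if k = j then 1 else 0) = f k := by
    intro f k; simp
  have L2 : ∀ (f : Fin n → ℝ) (j : Fin n), ∑ k, (if k = j then 1 else 0) * f k = f j := by
    intro f j; simp
  have e1 : ∀ (z : Fin n → ℝ) (k : Fin n),
      ∑ j, z j * -((1 : Matrix (Fin n) (Fin n) ℝ) k j - Q k j)
        = -(z k) + ∑ j, Q k j * z j := by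
    intro z k
    rw [show (∑ j, z j * -((1 : Matrix (Fin n) (Fin n) ℝ) k j - Q k j))
        = ∑ j, (-(z j * (1 : Matrix (Fin n) (Fin n) ℝ) k j) + z j * Q k j) from
      Finset.sum_congr rfl fun j _ => by ring]
    rw [Finset.sum_add_distrib, Finset.sum_neg_distrib]
    congr 1
    · congr 1
      simp [Matrix.one_apply, mul_ite]
    · exact Finset.sum_congr rfl fun j _ => by ring
  have e2 : ∀ (u : Fin n → ℝ) (j : Fin n),
      ∑ k, u k * -((1 : Matrix (Fin n) (Fin n) ℝ) k j - Q k j)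
        = -(u j) + ∑ k, u k * Q k j := by
    intro u j
    rw [show (∑ k, u k * -((1 : Matrix (Fin n) (Fin n) ℝ) k j - Q k j))
        = ∑ k, (-(u k * (1 : Matrix (Fin n) (Fin n) ℝ) k j) + u k * Q k j) from
      Finset.sum_congr rfl fun k _ => by ring]
    rw [Finset.sum_add_distrib, Finset.sum_neg_distrib]
    congr 1
    congr 1
    simp [Matrix.one_apply, mul_ite]
  -- step 1 : feasibility ↔ conic representation
  have h1 : (feas Q x).Nonempty ↔
      (∃ c : (Fin n ⊕ Fin n) → ℝ, (∀ i, 0 ≤ c i) ∧ ∑ i, c i • w i = toE x) := by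
    constructor
    · rintro ⟨z, hz0, hzf⟩
      refine ⟨Sum.elim (fun j => x j + Matrix.mulVec (1 - Q) z j) z, ?_, ?_⟩
      · rintro (j | j)
        · simpa using by linarith [hzf j]
        · exact hz0 j
      · ext k
        rw [sum_apply_E, Fintype.sum_sum_type]
        simp only [Sum.elim_inl, Sum.elim_inr, hwdef, happ]
        rw [L1 (fun j => x j + Matrix.mulVec (1 - Q) z j) k, e1 z k, mulVec_oneSub]
        ring
    · rintro ⟨c, hc0, hsum⟩
      refine ⟨fun j => c (Sum.inr j), fun j => hc0 _, ?_⟩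
      intro k
      have h := congrArg (fun (v : EuclideanSpace ℝ (Fin n)) => v k) hsum
      simp only at h
      rw [sum_apply_E, Fintype.sum_sum_type] at h
      simp only [Sum.elim_inl, Sum.elim_inr, hwdef, happ] at h
      rw [L1 (fun j => c (Sum.inl j)) k, e1 (fun j => c (Sum.inr j)) k] at h
      rw [mulVec_oneSub]
      have := hc0 (Sum.inl k)
      linarith
  -- step 2 : Farkas dual condition ↔ dual cone membership
  have h2 : (∀ y : EuclideanSpace ℝ (Fin n), (∀ i, 0 ≤ ⟪w i, y⟫) → 0 ≤ ⟪toE x, y⟫)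
      ↔ x ∈ dualConeC Q := by
    constructor
    · intro h u hu
      have hy : ∀ i, 0 ≤ ⟪w i, toE u⟫ := by
        rintro (j | j)
        · rw [hinner]
          simp only [hwdef, Sum.elim_inl, happ]
          rw [L2 u j]
          exact hu.1 j
        · rw [hinner]
          simp only [hwdef, Sum.elim_inr, happ]
          rw [show (∑ k, -((1:Matrix (Fin n) (Fin n) ℝ) k j - Q k j) * u k)
              = ∑ k, u k * -((1:Matrix (Fin n) (Fin n) ℝ) k j - Q k j) from
            Finset.sum_congr rfl fun k _ => mul_comm _ _, e2 u j]
          have hvm := hu.2 j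
          rw [vecMul_oneSub] at hvm
          linarith
      have h0 := h (toE u) hy
      rw [hinner] at h0
      calc (0:ℝ) ≤ ∑ k, toE x k * toE u k := h0
        _ = ∑ i, u i * x i :=
          Finset.sum_congr rfl fun k _ => by rw [happ, happ]; ring
    · intro hx y hy
      have hu0 : ∀ k, 0 ≤ y k := by
        intro k
        have h0 := hy (Sum.inl k)
        rw [hinner] at h0
        simp only [hwdef, Sum.elim_inl, happ] at h0
        rwa [L2 (fun k' => y k') k] at h0
      have hvm : ∀ j, Matrix.vecMul (fun k => y k) (1 - Q) j ≤ 0 := by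
        intro j
        have h0 := hy (Sum.inr j)
        rw [hinner] at h0
        simp only [hwdef, Sum.elim_inr, happ] at h0
        rw [show (∑ k, -((1:Matrix (Fin n) (Fin n) ℝ) k j - Q k j) * y k)
            = ∑ k, y k * -((1:Matrix (Fin n) (Fin n) ℝ) k j - Q k j) from
          Finset.sum_congr rfl fun k _ => mul_comm _ _, e2 (fun k => y k) j] at h0
        rw [vecMul_oneSub]
        linarith
      have := hx (fun k => y k) ⟨hu0, hvm⟩
      rw [hinner]
      calc (0:ℝ) ≤ ∑ i, y i * x i := this
        _ = ∑ k, toE x k * y k :=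
          Finset.sum_congr rfl fun k _ => by rw [happ]; ring
  rw [h1, hiff, h2]

theorem feas_to_js {n : ℕ} (Q : Matrix (Fin n) (Fin n) ℝ)
    (hQnonneg : ∀ i j, 0 ≤ Q i j) (hQdiag : ∀ i, Q i i = 0) (x : Fin n → ℝ)
    (w : Fin n → ℝ) (hw : w ∈ feas Q x) :
    ∃ z : Fin n → ℝ, (∀ i, 0 ≤ z i) ∧ JS Q x z := by
  classical
  set T : (Fin n → ℝ) → (Fin n → ℝ) :=
    fun z i => max 0 (∑ j, Q i j * z j - x i) with hT
  set g : ℕ → (Fin n → ℝ) := fun k => T^[k] 0 with hg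
  have hgsucc : ∀ k, g (k + 1) = T (g k) := by
    intro k; rw [hg]; simp [Function.iterate_succ_apply']
  have hT0 : ∀ z i, 0 ≤ T z i := fun z i => le_max_left 0 _
  have hTmono : ∀ z z', (∀ i, z i ≤ z' i) → ∀ i, T z i ≤ T z' i := by
    intro z z' h i
    apply max_le_max le_rfl
    have : ∑ j, Q i j * z j ≤ ∑ j, Q i j * z' j :=
      Finset.sum_le_sum fun j _ => mul_le_mul_of_nonneg_left (h j) (hQnonneg i j)
    linarith
  have hmono : ∀ k i, g k i ≤ g (k + 1) i := by
    intro k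
    induction k with
    | zero => intro i; rw [hgsucc 0]; exact hT0 _ i
    | succ m ih =>
      intro i
      rw [hgsucc m, hgsucc (m+1)]
      exact hTmono _ _ ih i
  have hmonoi : ∀ i, Monotone (fun k => g k i) := by
    intro i
    apply monotone_nat_of_le_succ
    intro k; exact hmono k i
  have hTw : ∀ i, T w i ≤ w i := by
    intro i
    apply max_le (hw.1 i)
    have := hw.2 i
    rw [mulVec_oneSub] at this
    linarith
  have hub : ∀ k i, g k i ≤ w i := by
    intro k
    induction k with
    | zero => intro i; exact hw.1 i
    | succ m ih =>
      intro i
      rw [hgsucc m]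
      exact le_trans (hTmono _ _ ih i) (hTw i)
  set z : Fin n → ℝ := fun i => ⨆ k, g k i with hz
  have hbdd : ∀ i, BddAbove (Set.range fun k => g k i) := by
    intro i
    exact ⟨w i, by rintro _ ⟨k, rfl⟩; exact hub k i⟩
  have hconv : ∀ i, Filter.Tendsto (fun k => g k i) Filter.atTop (nhds (z i)) := by
    intro i
    exact tendsto_atTop_ciSup (hmonoi i) (hbdd i)
  have hfix : ∀ i, z i = max 0 (∑ j, Q i j * z j - x i) := by
    intro i
    have h1 : Filter.Tendsto (fun k => T (g k) i) Filter.atTop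
        (nhds (max 0 (∑ j, Q i j * z j - x i))) := by
      apply Filter.Tendsto.max tendsto_const_nhds
      apply Filter.Tendsto.sub_const
      exact tendsto_finset_sum _ fun j _ => (hconv j).const_mul (Q i j)
    have h2 : Filter.Tendsto (fun k => T (g k) i) Filter.atTop (nhds (z i)) := by
      have := (hconv i).comp (Filter.tendsto_add_atTop_nat 1)
      convert this using 1
      funext k
      rw [← hgsucc k]
      rfl
    exact tendsto_nhds_unique h2 h1
  refine ⟨z, fun i => by rw [hfix i]; exact le_max_left 0 _, ?_⟩
  intro i
  rw [hfix i, nPart]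
  congr 1
  rw [neg_sub]
  congr 1
  rw [Finset.sum_erase Finset.univ (by rw [hQdiag i, zero_mul])]


end Aux

/-- Theorem 2.1 (existence part): JS(x) has a nonnegative solution iff `x ∈ C*`. -/
theorem js_solvable_iff_mem_dualCone {n : ℕ} (hn : 1 ≤ n)
    (Q : Matrix (Fin n) (Fin n) ℝ)
    (hQnonneg : ∀ i j, 0 ≤ Q i j) (hQdiag : ∀ i, Q i i = 0)
    (x : Fin n → ℝ) :
    (∃ z : Fin n → ℝ, (∀ i, 0 ≤ z i) ∧ JS Q x z) ↔ x ∈ dualConeC Q := by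
  constructor
  · rintro ⟨z, hz0, hzJS⟩
    -- z is feasible
    have hfeas : z ∈ feas Q x := by
      refine ⟨hz0, fun i => ?_⟩
      have h := hzJS i
      rw [nPart] at h
      have herase : ∑ j ∈ Finset.univ.erase i, Q i j * z j = ∑ j, Q i j * z j :=
        Finset.sum_erase Finset.univ (by rw [hQdiag i, zero_mul])
      rw [herase, neg_sub] at h
      rw [mulVec_oneSub]
      have : ∑ j, Q i j * z j - x i ≤ z i := h ▸ le_max_right _ _
      linarith
    intro u hu
    have h1 : ∑ j, Matrix.vecMul u (1 - Q) j * z j ≤ 0 :=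
      Finset.sum_nonpos fun j _ => mul_nonpos_of_nonpos_of_nonneg (hu.2 j) (hz0 j)
    have h2 : ∑ i, u i * (-(x i)) ≤ ∑ i, u i * Matrix.mulVec (1 - Q) z i :=
      Finset.sum_le_sum fun i _ => mul_le_mul_of_nonneg_left (hfeas.2 i) (hu.1 i)
    have h3 : ∑ i, u i * Matrix.mulVec (1 - Q) z i
        = ∑ j, Matrix.vecMul u (1 - Q) j * z j := by
      have := Matrix.dotProduct_mulVec u (1 - Q) z
      simpa [dotProduct] using this
    have h4 : ∑ i, u i * (-(x i)) = -∑ i, u i * x i := by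
      rw [← Finset.sum_neg_distrib]
      exact Finset.sum_congr rfl fun i _ => by ring
    rw [h3] at h2
    rw [h4] at h2
    linarith
  · intro hx
    obtain ⟨w, hw⟩ := (feas_nonempty_iff Q x).mpr hx
    exact feas_to_js Q hQnonneg hQdiag x w hw
end

section
/- Let n ≥ 1, let Q be an n×n real matrix with nonnegative entries and zero diagonal, and let x ∈ ℝⁿ be such that the jump system JS(x) has at least one nonnegative solution. Then there exists a unique solution z* of JS(x) that is minimal with respect to the componentwise partial order: z* solves JS(x), and every nonnegative solution z of JS(x) satisfies z* ≤ z componentwise. -/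
open Matrix Finset Filter

/-- The monotone map whose fixed points are solutions of JS. -/
noncomputable def Tmap {n : ℕ} (Q : Matrix (Fin n) (Fin n) ℝ) (x z : Fin n → ℝ) :
    Fin n → ℝ :=
  fun i => nPart (x i - ∑ j ∈ Finset.univ.erase i, Q i j * z j)

lemma Tmap_nonneg {n : ℕ} (Q : Matrix (Fin n) (Fin n) ℝ) (x z : Fin n → ℝ) (i : Fin n) :
    0 ≤ Tmap Q x z i := le_max_left _ _

lemma Tmap_mono {n : ℕ} (Q : Matrix (Fin n) (Fin n) ℝ) (hQ : ∀ i j, 0 ≤ Q i j)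
    (x z z' : Fin n → ℝ) (h : ∀ i, z i ≤ z' i) (i : Fin n) :
    Tmap Q x z i ≤ Tmap Q x z' i := by
  refine max_le_max le_rfl ?_
  have hsum : ∑ j ∈ Finset.univ.erase i, Q i j * z j ≤
      ∑ j ∈ Finset.univ.erase i, Q i j * z' j :=
    Finset.sum_le_sum fun j _ => mul_le_mul_of_nonneg_left (h j) (hQ i j)
  linarith

lemma JS_iff_Tmap {n : ℕ} (Q : Matrix (Fin n) (Fin n) ℝ) (x z : Fin n → ℝ) :
    JS Q x z ↔ ∀ i, z i = Tmap Q x z i := Iff.rfl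

/-- Theorem 2.1 (uniqueness of the minimal jump): if JS(x) has a nonnegative solution,
then it has a unique minimal solution with respect to the componentwise order. -/
theorem js_unique_minimal_solution {n : ℕ} (hn : 1 ≤ n)
    (Q : Matrix (Fin n) (Fin n) ℝ)
    (hQnonneg : ∀ i j, 0 ≤ Q i j) (hQdiag : ∀ i, Q i i = 0)
    (x : Fin n → ℝ)
    (hsol : ∃ z : Fin n → ℝ, (∀ i, 0 ≤ z i) ∧ JS Q x z) :
    ∃! zstar : Fin n → ℝ, ((∀ i, 0 ≤ zstar i) ∧ JS Q x zstar) ∧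
      ∀ z : Fin n → ℝ, (∀ i, 0 ≤ z i) → JS Q x z → ∀ i, zstar i ≤ z i := by
  obtain ⟨z0, hz0nn, hz0⟩ := hsol
  rw [JS_iff_Tmap] at hz0
  -- prefixed points of Tmap in [0, z0]
  set S : Set (Fin n → ℝ) :=
    {u | (∀ i, 0 ≤ u i) ∧ (∀ i, u i ≤ z0 i) ∧ ∀ i, Tmap Q x u i ≤ u i} with hS
  have hz0S : z0 ∈ S := ⟨hz0nn, fun i => le_rfl, fun i => (hz0 i).ge⟩
  set zs : Fin n → ℝ := fun i => sInf ((fun u => u i) '' S) with hzs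
  have hbdd : ∀ i, BddBelow ((fun u => u i) '' S) := by
    intro i; exact ⟨0, by rintro _ ⟨u, hu, rfl⟩; exact hu.1 i⟩
  have hne : ∀ i, ((fun u => u i) '' S).Nonempty := fun i => ⟨z0 i, z0, hz0S, rfl⟩
  have hzs_le : ∀ u ∈ S, ∀ i, zs i ≤ u i := fun u hu i => csInf_le (hbdd i) ⟨u, hu, rfl⟩
  have hle_zs : ∀ c : Fin n → ℝ, (∀ u ∈ S, ∀ i, c i ≤ u i) → ∀ i, c i ≤ zs i := by
    intro c hc i
    exact le_csInf (hne i) (by rintro _ ⟨u, hu, rfl⟩; exact hc u hu i)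
  have hzs_nn : ∀ i, 0 ≤ zs i := hle_zs 0 fun u hu i => hu.1 i
  have hzs_le_z0 : ∀ i, zs i ≤ z0 i := hzs_le z0 hz0S
  have hT_le : ∀ i, Tmap Q x zs i ≤ zs i := by
    refine hle_zs _ fun u hu i => ?_
    exact (Tmap_mono Q hQnonneg x zs u (hzs_le u hu) i).trans (hu.2.2 i)
  have hTzsS : Tmap Q x zs ∈ S := by
    refine ⟨Tmap_nonneg Q x zs, fun i => ?_, fun i => Tmap_mono Q hQnonneg x _ _ hT_le i⟩
    exact (Tmap_mono Q hQnonneg x zs z0 hzs_le_z0 i).trans (hz0 i).ge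
  have hle_T : ∀ i, zs i ≤ Tmap Q x zs i := hzs_le _ hTzsS
  have hJSzs : JS Q x zs := fun i => le_antisymm (hle_T i) (hT_le i)
  have hmin : ∀ z : Fin n → ℝ, (∀ i, 0 ≤ z i) → JS Q x z → ∀ i, zs i ≤ z i := by
    intro z hznn hzJS i
    rw [JS_iff_Tmap] at hzJS
    have hwS : (fun j => min (z j) (z0 j)) ∈ S := by
      refine ⟨fun j => le_min (hznn j) (hz0nn j), fun j => min_le_right _ _, fun j => ?_⟩
      refine le_min ?_ ?_
      · exact (Tmap_mono Q hQnonneg x _ z (fun k => min_le_left _ _) j).trans (hzJS j).ge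
      · exact (Tmap_mono Q hQnonneg x _ z0 (fun k => min_le_right _ _) j).trans (hz0 j).ge
    exact (hzs_le _ hwS i).trans (min_le_left _ _)
  refine ⟨zs, ⟨⟨hzs_nn, hJSzs⟩, hmin⟩, ?_⟩
  rintro y ⟨⟨hynn, hyJS⟩, hymin⟩
  funext i
  exact le_antisymm (hymin zs hzs_nn hJSzs i) (hmin y hynn hyJS i)
end

section
/- Let n ≥ 1, let Q be an n×n real matrix with nonnegative entries and zero diagonal, and let x ∈ ℝⁿ. If z* ∈ F(x) minimizes the ℓ¹ objective Σ_{i=1}^n z_i over F(x) (i.e., Σ_i z*_i ≤ Σ_i z_i for all z ∈ F(x)), then z* solves the jump system JS(x): for every 1 ≤ i ≤ n, z*_i = ( x_i − Σ_{j≠i} q_{ij} z*_j )_{-}; equivalently, for each i, either z*_i = 0 or z*_i = −( x_i − Σ_{j≠i} q_{ij} z*_j ). -/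
open Matrix Finset Filter

/-- Complementary slackness: an ℓ¹-minimizer over `F(x)` solves the jump system JS(x);
equivalently, for each `i`, either `z*_i = 0` or `z*_i = −(x_i − ∑_{j≠i} q_{ij} z*_j)`. -/
theorem l1_minimizer_solves_js {n : ℕ} (hn : 1 ≤ n)
    (Q : Matrix (Fin n) (Fin n) ℝ)
    (hQnonneg : ∀ i j, 0 ≤ Q i j) (hQdiag : ∀ i, Q i i = 0)
    (x : Fin n → ℝ) (zstar : Fin n → ℝ)
    (hmem : zstar ∈ feas Q x)
    (hmin : ∀ z ∈ feas Q x, ∑ i, zstar i ≤ ∑ i, z i) :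
    JS Q x zstar ∧
      ∀ i, zstar i = 0 ∨
        zstar i = -(x i - ∑ j ∈ Finset.univ.erase i, Q i j * zstar j) := by
  obtain ⟨hz0, hzc⟩ := hmem
  have hmv : ∀ (z : Fin n → ℝ) (i : Fin n),
      Matrix.mulVec (1 - Q) z i
        = z i - ∑ j ∈ Finset.univ.erase i, Q i j * z j := by
    intro z i
    rw [Matrix.sub_mulVec, Matrix.one_mulVec]
    simp only [Pi.sub_apply]
    congr 1
    rw [Matrix.mulVec, dotProduct]
    rw [← Finset.add_sum_erase _ _ (Finset.mem_univ i), hQdiag, zero_mul, zero_add]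
  have key : JS Q x zstar := by
    intro i
    set s := ∑ j ∈ Finset.univ.erase i, Q i j * zstar j with hs
    have hci := hzc i
    rw [hmv] at hci
    have hle : nPart (x i - s) ≤ zstar i := by
      apply max_le (hz0 i); linarith
    rcases lt_or_eq_of_le hle with hlt | heq
    · exfalso
      set m := nPart (x i - s) with hmdef
      set z' := Function.update zstar i m with hz'
      have hz'i : z' i = m := Function.update_self i m zstar
      have hz'j : ∀ j, j ≠ i → z' j = zstar j := fun j hj => Function.update_of_ne hj m zstar
      have hsum : ∀ k, ∑ j ∈ Finset.univ.erase k, Q k j * z' j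
          ≤ ∑ j ∈ Finset.univ.erase k, Q k j * zstar j := by
        intro k
        apply Finset.sum_le_sum
        intro j hj
        by_cases hji : j = i
        · subst hji
          rw [hz'i]
          exact mul_le_mul_of_nonneg_left hlt.le (hQnonneg k j)
        · rw [hz'j j hji]
      have hfeas' : z' ∈ feas Q x := by
        constructor
        · intro j
          by_cases hji : j = i
          · subst hji; rw [hz'i]; exact le_max_left _ _
          · rw [hz'j j hji]; exact hz0 j
        · intro k
          rw [hmv]
          by_cases hki : k = i
          · subst hki
            rw [hz'i]
            have he : ∑ j ∈ Finset.univ.erase k, Q k j * z' j = s := by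
              rw [hs]
              exact Finset.sum_congr rfl fun j hj => by
                rw [hz'j j (Finset.ne_of_mem_erase hj)]
            rw [he]
            have hm : -(x k - s) ≤ m := le_max_right _ _
            linarith
          · rw [hz'j k hki]
            have h1 := hzc k
            rw [hmv] at h1
            have h2 := hsum k
            linarith
      have hlt' : ∑ j, z' j < ∑ j, zstar j := by
        rw [← Finset.add_sum_erase _ z' (Finset.mem_univ i),
            ← Finset.add_sum_erase _ zstar (Finset.mem_univ i)]
        have he : ∑ j ∈ Finset.univ.erase i, z' j = ∑ j ∈ Finset.univ.erase i, zstar j :=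
          Finset.sum_congr rfl fun j hj => hz'j j (Finset.ne_of_mem_erase hj)
        rw [hz'i, he]
        linarith
      exact absurd (hmin z' hfeas') (not_le.mpr hlt')
    · exact heq.symm
  refine ⟨key, fun i => ?_⟩
  have h := key i
  unfold nPart at h
  rcases le_total (-(x i - ∑ j ∈ Finset.univ.erase i, Q i j * zstar j)) 0 with hc | hc
  · left; rw [h, max_eq_left hc]
  · right; rw [h, max_eq_right hc]
end

section
/- Let n ≥ 1, let Q be an n×n real matrix with nonnegative entries and zero diagonal, and let x ∈ ℝⁿ. The feasible set F(x) = { z ∈ ℝⁿ : z ≥ 0 componentwise and (I−Q)z ≥ −x componentwise } is closed under componentwise minimum: if z and z' both belong to F(x), then the vector w with w_i = min(z_i, z'_i) also belongs to F(x). -/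
open Matrix Finset Filter

lemma mulVec_sub_eq {n : ℕ} (Q : Matrix (Fin n) (Fin n) ℝ) (v : Fin n → ℝ) (i : Fin n) :
    Matrix.mulVec (1 - Q) v i = v i - ∑ j, Q i j * v j := by
  simp only [Matrix.mulVec, dotProduct, Matrix.sub_apply, Matrix.one_apply, sub_mul,
    Finset.sum_sub_distrib, ite_mul, one_mul, zero_mul, Finset.sum_ite_eq, Finset.mem_univ,
    if_pos]

/-- The feasible set `F(x)` is closed under componentwise minimum. -/
theorem feas_closed_under_min {n : ℕ} (hn : 1 ≤ n)
    (Q : Matrix (Fin n) (Fin n) ℝ)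
    (hQnonneg : ∀ i j, 0 ≤ Q i j) (hQdiag : ∀ i, Q i i = 0)
    (x : Fin n → ℝ) (z z' : Fin n → ℝ)
    (hz : z ∈ feas Q x) (hz' : z' ∈ feas Q x) :
    (fun i => min (z i) (z' i)) ∈ feas Q x := by
  obtain ⟨hz0, hz1⟩ := hz
  obtain ⟨hz'0, hz'1⟩ := hz'
  refine ⟨fun i => le_min (hz0 i) (hz'0 i), fun i => ?_⟩
  rw [mulVec_sub_eq]
  have key : ∀ (a b : Fin n → ℝ), (∀ i, -(x i) ≤ Matrix.mulVec (1 - Q) a i) →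
      min (z i) (z' i) = a i → (∀ j, min (z j) (z' j) ≤ a j) →
      -(x i) ≤ min (z i) (z' i) - ∑ j, Q i j * min (z j) (z' j) := by
    intro a b ha hmin hle
    calc -(x i) ≤ Matrix.mulVec (1 - Q) a i := ha i
    _ = a i - ∑ j, Q i j * a j := mulVec_sub_eq Q a i
    _ ≤ min (z i) (z' i) - ∑ j, Q i j * min (z j) (z' j) := by
        rw [hmin]
        apply sub_le_sub_left
        exact Finset.sum_le_sum fun j _ => mul_le_mul_of_nonneg_left (hle j) (hQnonneg i j)
  rcases min_cases (z i) (z' i) with ⟨h, _⟩ | ⟨h, _⟩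
  · exact key z z hz1 h (fun j => min_le_left _ _)
  · exact key z' z' hz'1 h (fun j => min_le_right _ _)
end

section
/- Let Y : [0, ∞) → ℝ be a function, let t > 0, and suppose: (i) the set { (Y(s))_{-} : s ∈ [0, t] } is bounded above, and (ii) Y has a left limit Y⁻ at t, i.e., Y(s) → Y⁻ as s → t with s < t. Define L(s) = sup_{r ∈ [0, s]} (Y(r))_{-} for s ∈ [0, t], define the left limit L⁻ = sup_{s ∈ [0, t)} L(s), and set X⁻ = Y⁻ + L⁻. Then L(t) − L⁻ = ( X⁻ + (Y(t) − Y⁻) )_{-}. -/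
open Filter Set

lemma nPart_key (a S : ℝ) (hS : 0 ≤ S) :
    max (max 0 (-a)) S - S = max 0 (-(S + a)) := by
  rcases le_total (-a) S with h | h
  · rw [max_eq_right (max_le hS h), max_eq_left (by linarith)]
    ring
  · rw [max_eq_left (h.trans (le_max_right 0 (-a))), max_eq_right (hS.trans h),
      max_eq_right (by linarith : (0:ℝ) ≤ -(S + a))]
    ring

/-- Lemma 3.1: the jump of the Skorokhod reflection process.  With
`L s = sup_{r ∈ [0,s]} (Y r)₋`, `L⁻ = sup_{s ∈ [0,t)} L s` and `X⁻ = Y⁻ + L⁻`,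
one has `L t − L⁻ = (X⁻ + (Y t − Y⁻))₋`. -/
theorem skorokhod_jump (Y : ℝ → ℝ) (t : ℝ) (ht : 0 < t)
    (hbdd : BddAbove ((fun s => nPart (Y s)) '' Set.Icc 0 t))
    (Yminus : ℝ)
    (hY : Tendsto Y (nhdsWithin t (Set.Iio t)) (nhds Yminus))
    (L : ℝ → ℝ)
    (hL : ∀ s ∈ Set.Icc (0 : ℝ) t, L s = sSup ((fun r => nPart (Y r)) '' Set.Icc 0 s))
    (Lminus : ℝ) (hLminus : Lminus = sSup (L '' Set.Ico 0 t))
    (Xminus : ℝ) (hXminus : Xminus = Yminus + Lminus) :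
    L t - Lminus = nPart (Xminus + (Y t - Yminus)) := by
  set f : ℝ → ℝ := fun r => nPart (Y r) with hf
  set A : Set ℝ := f '' Set.Ico 0 t with hA
  have hAne : A.Nonempty := ⟨f 0, Set.mem_image_of_mem f ⟨le_refl 0, ht⟩⟩
  have hAsub : A ⊆ f '' Set.Icc 0 t := image_mono (f := f) Ico_subset_Icc_self
  have hAbdd : BddAbove A := hbdd.mono hAsub
  have hLm : Lminus = sSup A := by
    rw [hLminus]
    apply le_antisymm
    · refine csSup_le ⟨L 0, Set.mem_image_of_mem L ⟨le_refl 0, ht⟩⟩ ?_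
      rintro x ⟨s, hs, rfl⟩
      rw [hL s ⟨hs.1, hs.2.le⟩]
      refine csSup_le ⟨f 0, Set.mem_image_of_mem f ⟨le_refl 0, hs.1⟩⟩ ?_
      rintro y ⟨r, hr, rfl⟩
      exact le_csSup hAbdd (Set.mem_image_of_mem f ⟨hr.1, lt_of_le_of_lt hr.2 hs.2⟩)
    · refine csSup_le hAne ?_
      rintro x ⟨r, hr, rfl⟩
      have hLr : f r ≤ L r := by
        rw [hL r ⟨hr.1, hr.2.le⟩]
        exact le_csSup (hbdd.mono (image_mono (f := f) (Icc_subset_Icc_right hr.2.le)))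
          (Set.mem_image_of_mem f ⟨hr.1, le_refl r⟩)
      refine hLr.trans (le_csSup ?_ (Set.mem_image_of_mem L hr))
      refine ⟨sSup (f '' Set.Icc 0 t), ?_⟩
      rintro y ⟨s, hs, rfl⟩
      rw [hL s ⟨hs.1, hs.2.le⟩]
      refine csSup_le ⟨f 0, Set.mem_image_of_mem f ⟨le_refl 0, hs.1⟩⟩ ?_
      rintro z ⟨r', hr', rfl⟩
      exact le_csSup hbdd (Set.mem_image_of_mem f ⟨hr'.1, hr'.2.trans hs.2.le⟩)
  have hIcc : Set.Icc (0:ℝ) t = insert t (Set.Ico 0 t) := (Set.Ico_insert_right ht.le).symm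
  have hLt : L t = max (f t) (sSup A) := by
    rw [hL t ⟨ht.le, le_refl t⟩, hIcc, image_insert_eq, csSup_insert hAbdd hAne]
  have hS0 : 0 ≤ sSup A :=
    le_trans (le_max_left 0 (-Y 0)) (le_csSup hAbdd (Set.mem_image_of_mem f ⟨le_refl 0, ht⟩))
  rw [hLt, hLm, hXminus, hLm]
  have hrw : Yminus + sSup A + (Y t - Yminus) = sSup A + Y t := by ring
  rw [hrw]
  have := nPart_key (Y t) (sSup A) hS0
  simpa [hf, nPart, max_comm] using this
end

section
/- Let n ≥ 1, let Q be an n×n real matrix with nonnegative entries and zero diagonal, let x ∈ ℝⁿ, and define Γ : ℝⁿ → ℝⁿ by Γ[z]_i = ( x_i − Σ_{j≠i} q_{ij} z_j )_{-}. Suppose the feasible set F(x) = { z ∈ ℝⁿ : z ≥ 0 componentwise and (I−Q)z ≥ −x componentwise } is nonempty. Then: (a) every z ∈ F(x) satisfies Γ[z] ≤ z componentwise; (b) the iterates z⁽ᵏ⁾ = Γᵏ[0] starting from z⁽⁰⁾ = 0 form a componentwise nondecreasing sequence bounded above by every element of F(x); and (c) z⁽ᵏ⁾ converges as k → ∞ to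 the least nonnegative solution z* of the jump system JS(x), i.e., z* solves JS(x) and z* ≤ z componentwise for every nonnegative solution z of JS(x). -/
open Matrix Finset Filter

/-- Iterative construction of the minimal jump: if `F(x)` is nonempty, then
(a) `Γ[z] ≤ z` for every `z ∈ F(x)`; (b) the iterates `z⁽ᵏ⁾ = Γᵏ[0]` are componentwise
nondecreasing and bounded above by every element of `F(x)`; and (c) they converge to
the least nonnegative solution `z*` of the jump system JS(x). -/
theorem gamma_iterates_converge_to_minimal {n : ℕ} (hn : 1 ≤ n)
    (Q : Matrix (Fin n) (Fin n) ℝ)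
    (hQnonneg : ∀ i j, 0 ≤ Q i j) (hQdiag : ∀ i, Q i i = 0)
    (x : Fin n → ℝ)
    (Γ : (Fin n → ℝ) → (Fin n → ℝ))
    (hΓ : ∀ z i, Γ z i = nPart (x i - ∑ j ∈ Finset.univ.erase i, Q i j * z j))
    (hne : (feas Q x).Nonempty) :
    (∀ z ∈ feas Q x, ∀ i, Γ z i ≤ z i) ∧
    (∀ k : ℕ, ∀ i, (Γ^[k] 0) i ≤ (Γ^[k + 1] 0) i) ∧
    (∀ k : ℕ, ∀ z ∈ feas Q x, ∀ i, (Γ^[k] 0) i ≤ z i) ∧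
    (∃ zstar : Fin n → ℝ,
      Tendsto (fun k => Γ^[k] 0) atTop (nhds zstar) ∧
      (∀ i, 0 ≤ zstar i) ∧ JS Q x zstar ∧
      ∀ z : Fin n → ℝ, (∀ i, 0 ≤ z i) → JS Q x z → ∀ i, zstar i ≤ z i) := by

  classical
  obtain ⟨zb, hzb⟩ := hne
  -- sum over erase equals full sum (diagonal zero)
  have hsum : ∀ z : Fin n → ℝ, ∀ i, ∑ j ∈ Finset.univ.erase i, Q i j * z j = ∑ j, Q i j * z j := by
    intro z i
    exact Finset.sum_erase _ (by simp [hQdiag i])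
  -- monotonicity of Γ
  have hmono : ∀ z w : Fin n → ℝ, (∀ i, z i ≤ w i) → ∀ i, Γ z i ≤ Γ w i := by
    intro z w h i
    rw [hΓ, hΓ]
    unfold nPart
    apply max_le_max le_rfl
    simp only [neg_sub]
    have : ∑ j ∈ Finset.univ.erase i, Q i j * z j ≤ ∑ j ∈ Finset.univ.erase i, Q i j * w j :=
      Finset.sum_le_sum fun j _ => mul_le_mul_of_nonneg_left (h j) (hQnonneg i j)
    linarith
  -- Γ z ≥ 0 always
  have hΓnonneg : ∀ z : Fin n → ℝ, ∀ i, 0 ≤ Γ z i := by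
    intro z i; rw [hΓ]; exact le_max_left _ _
  -- (a)
  have ha : ∀ z ∈ feas Q x, ∀ i, Γ z i ≤ z i := by
    intro z hz i
    obtain ⟨hz0, hzf⟩ := hz
    have hf := hzf i
    have hmv : Matrix.mulVec (1 - Q) z i = z i - ∑ j, Q i j * z j := by
      simp [Matrix.mulVec, dotProduct, Matrix.sub_apply, Matrix.one_apply, sub_mul,
        Finset.sum_sub_distrib, ite_mul, Finset.sum_ite_eq]
    rw [hmv] at hf
    rw [hΓ]
    unfold nPart
    apply max_le (hz0 i)
    rw [hsum]
    linarith
  -- (b) monotone iterates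
  have hb : ∀ k : ℕ, ∀ i, (Γ^[k] 0) i ≤ (Γ^[k + 1] 0) i := by
    intro k
    induction k with
    | zero => intro i; simpa using hΓnonneg 0 i
    | succ m ih =>
      intro i
      rw [Function.iterate_succ_apply', Function.iterate_succ_apply']
      exact hmono _ _ ih i
  -- bound by any fixed point of Γ-type inequality
  have hbound : ∀ (z : Fin n → ℝ), (∀ i, 0 ≤ z i) → (∀ i, Γ z i ≤ z i) →
      ∀ k : ℕ, ∀ i, (Γ^[k] 0) i ≤ z i := by
    intro z hz0 hfix k
    induction k with
    | zero => intro i; simpa using hz0 i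
    | succ m ih =>
      intro i
      rw [Function.iterate_succ_apply']
      exact le_trans (hmono _ _ ih i) (hfix i)
  have hc : ∀ k : ℕ, ∀ z ∈ feas Q x, ∀ i, (Γ^[k] 0) i ≤ z i := by
    intro k z hz i
    exact hbound z hz.1 (ha z hz) k i
  refine ⟨ha, hb, hc, ?_⟩
  -- coordinate-wise monotone sequences
  have hmonoseq : ∀ i, Monotone (fun k => (Γ^[k] 0) i) :=
    fun i => monotone_nat_of_le_succ (fun k => hb k i)
  have hbdd : ∀ i, BddAbove (Set.range fun k => (Γ^[k] 0) i) := by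
    intro i
    exact ⟨zb i, by rintro _ ⟨k, rfl⟩; exact hc k zb hzb i⟩
  set zstar : Fin n → ℝ := fun i => ⨆ k, (Γ^[k] 0) i with hzstar
  have hconv : ∀ i, Tendsto (fun k => (Γ^[k] 0) i) atTop (nhds (zstar i)) := by
    intro i
    exact tendsto_atTop_ciSup (hmonoseq i) (hbdd i)
  have hconvfull : Tendsto (fun k => Γ^[k] 0) atTop (nhds zstar) :=
    tendsto_pi_nhds.mpr hconv
  have hzstar0 : ∀ i, 0 ≤ zstar i := by
    intro i
    have := le_ciSup (hbdd i) 0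
    simpa using this
  have hJS : JS Q x zstar := by
    intro i
    have h1 : Tendsto (fun k => (Γ^[k + 1] 0) i) atTop (nhds (zstar i)) :=
      (hconv i).comp (tendsto_add_atTop_nat 1)
    have h2 : Tendsto (fun k => (Γ^[k + 1] 0) i) atTop
        (nhds (nPart (x i - ∑ j ∈ Finset.univ.erase i, Q i j * zstar j))) := by
      have heq : (fun k => (Γ^[k + 1] 0) i)
          = fun k => nPart (x i - ∑ j ∈ Finset.univ.erase i, Q i j * (Γ^[k] 0) j) := by
        funext k
        rw [Function.iterate_succ_apply', hΓ]
      rw [heq]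
      have hcont : Continuous nPart := continuous_const.max continuous_neg
      apply (hcont.tendsto _).comp
      apply Tendsto.sub tendsto_const_nhds
      exact tendsto_finset_sum _ (fun j _ => Tendsto.const_mul _ (hconv j))
    exact tendsto_nhds_unique h1 h2
  refine ⟨zstar, hconvfull, hzstar0, hJS, ?_⟩
  intro z hz0 hzJS i
  have hfix : ∀ i, Γ z i ≤ z i := by
    intro i; rw [hΓ, ← hzJS i]
  exact ciSup_le fun k => hbound z hz0 hfix k i
end
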